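/- A degenerate linearly convex domain D ⊂ ℂⁿ containing a complex line is, after a complex affine change of coordinates, of the form ℂ × D' for some domain D' ⊂ ℂ^{n-1}; precisely, if D is linearly convex and contains the line ℂ × {0} (n ≥ 2), then D = ℂ × G for some open set G ⊂ ℂ^{n-1}. -/

import Mathlib

/-- A linearly convex domain in `ℂ × ℂᵐ` containing the line `ℂ × {0}` is of the form
`ℂ × G` for some open set `G`. -/
theorem degenerate_linearly_convex_is_product (m : ℕ)
    (D : Set (ℂ × (Fin m → ℂ))) (hopen : IsOpen D) (hconn : IsConnected D)
    (hlc : ∀ z ∉ D, ∃ v : ℂ × (Fin m → ℂ), v ≠ 0 ∧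
      ∀ w ∈ D, (w.1 - z.1) * v.1 + ∑ i, (w.2 i - z.2 i) * v.2 i ≠ 0)
    (hline : ∀ c : ℂ, (c, (0 : Fin m → ℂ)) ∈ D) :
    ∃ G : Set (Fin m → ℂ), IsOpen G ∧ D = Set.univ ×ˢ G := by
  -- Key: membership in D does not depend on the first coordinate.
  have key : ∀ p ∈ D, ∀ c : ℂ, (c, p.2) ∈ D := by
    intro p hp c
    by_contra hc
    obtain ⟨v, hv, hsep⟩ := hlc (c, p.2) hc
    -- First: v.1 = 0, since the line ℂ × {0} lies in D.
    have hv1 : v.1 = 0 := by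
      by_contra hv1
      have h := hsep (c - (∑ i, (0 - p.2 i) * v.2 i) / v.1, 0)
        (hline _)
      apply h
      field_simp
      simp only [Pi.zero_apply, zero_mul, zero_sub, neg_mul, Finset.sum_neg_distrib]
      ring
    -- Then p itself violates the separation.
    have h := hsep p hp
    apply h
    simp [hv1]
  refine ⟨{y | (0, y) ∈ D}, ?_, ?_⟩
  · have : Continuous fun y : Fin m → ℂ => ((0 : ℂ), y) := by continuity
    exact hopen.preimage this
  · ext ⟨a, y⟩
    simp only [Set.mem_prod, Set.mem_univ, Set.mem_setOf_eq, true_and]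
    constructor
    · intro h; exact key (a, y) h 0
    · intro h; exact key (0, y) h a
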